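/- The map H(z₁,z₂) = (-z₁ + (3√3/2)z₂², -z₂), restricted to B², belongs to the class M₋; that is, H is holomorphic on B², H(0) = 0, dH₀ = -id, and Re⟨H(z), z⟩ ≤ 0 for all z ∈ B². -/

import Mathlib

open Complex

noncomputable section

/-- The open unit ball in `ℂ²`. -/
def B2 : Set (ℂ × ℂ) := {z | ‖z.1‖ ^ 2 + ‖z.2‖ ^ 2 < 1}

/-- The class `M₋` of holomorphic maps `H : B² → ℂ²` with `H(0) = 0`, `dH₀ = -id`,
and `Re⟨H(z), z⟩ ≤ 0` on `B²`. -/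
def MminusClass (H : ℂ × ℂ → ℂ × ℂ) : Prop :=
  DifferentiableOn ℂ H B2 ∧ H 0 = 0 ∧
  (∀ z : ℂ × ℂ, fderiv ℂ H 0 z = -z) ∧
  ∀ z ∈ B2, ((H z).1 * (starRingEnd ℂ) z.1 + (H z).2 * (starRingEnd ℂ) z.2).re ≤ 0

/-- The coefficient `q¹_{0,2} = (1/2)·∂²H₁/∂z₂²(0)`. -/
def shearCoef (H : ℂ × ℂ → ℂ × ℂ) : ℂ :=
  (1 / 2 : ℂ) * iteratedDeriv 2 (fun w : ℂ => (H (0, w)).1) 0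

/-- The key real inequality: `(3√3/2)·a·b² ≤ a² + b²` on the unit disc. -/
lemma key_ineq (a b : ℝ) (ha : 0 ≤ a) (h : a ^ 2 + b ^ 2 < 1) :
    3 * Real.sqrt 3 / 2 * (b ^ 2 * a) ≤ a ^ 2 + b ^ 2 := by
  set s := Real.sqrt 3 with hsdef
  have hs : s ^ 2 = 3 := Real.sq_sqrt (by norm_num)
  have hs0 : 0 ≤ s := Real.sqrt_nonneg 3
  rcases le_or_gt (3 * s * a) 2 with hc | hc
  · nlinarith [sq_nonneg b, sq_nonneg a, mul_nonneg (sq_nonneg b) ha]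
  · have key : 0 ≤ (s * a - 1) ^ 2 * (s * a + 2) := by positivity
    have hb2 : b ^ 2 < 1 - a ^ 2 := by linarith
    nlinarith [mul_nonneg (sq_nonneg b) ha,
      mul_le_mul_of_nonneg_left hb2.le (by linarith : (0:ℝ) ≤ 3 * s * a - 2)]

/-- The extremal shear vector field belongs to the class `M₋`. -/
theorem extremal_mem_Mminus :
    MminusClass (fun z : ℂ × ℂ =>
      (-z.1 + ((3 * Real.sqrt 3 / 2 : ℝ) : ℂ) * z.2 ^ 2, -z.2)) := by
  refine ⟨?_, by simp, ?_, ?_⟩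
  · apply Differentiable.differentiableOn
    fun_prop
  · intro z
    set c : ℂ := ((3 * Real.sqrt 3 / 2 : ℝ) : ℂ)
    have hq : HasFDerivAt (fun z : ℂ × ℂ => c * z.2 ^ 2) (0 : ℂ × ℂ →L[ℂ] ℂ) 0 := by
      have h1 : HasDerivAt (fun w : ℂ => c * w ^ 2) (c * (2 * 0 ^ 1)) 0 :=
        (hasDerivAt_pow 2 (0:ℂ)).const_mul c
      have h2 := h1.comp_hasFDerivAt (0 : ℂ × ℂ)
        (hasFDerivAt_snd (𝕜 := ℂ) (p := (0 : ℂ × ℂ)))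
      simpa [Function.comp_def] using h2.congr_fderiv (by ext <;> simp)
    have h1 : HasFDerivAt (fun z : ℂ × ℂ => -z.1 + c * z.2 ^ 2)
        (-(ContinuousLinearMap.fst ℂ ℂ ℂ)) 0 := by
      have h := ((hasFDerivAt_fst : HasFDerivAt _ _ (0 : ℂ × ℂ)).neg).add hq
      rw [add_zero] at h
      exact h
    have h2 : HasFDerivAt (fun z : ℂ × ℂ => -z.2)
        (-(ContinuousLinearMap.snd ℂ ℂ ℂ)) 0 :=
      (hasFDerivAt_snd : HasFDerivAt _ _ (0 : ℂ × ℂ)).neg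
    rw [(h1.prodMk h2).fderiv]
    simp [Prod.ext_iff]
  · intro z hz
    have hz' : ‖z.1‖ ^ 2 + ‖z.2‖ ^ 2 < 1 := hz
    have hre : (((-z.1 + ((3 * Real.sqrt 3 / 2 : ℝ) : ℂ) * z.2 ^ 2) * (starRingEnd ℂ) z.1
        + (-z.2) * (starRingEnd ℂ) z.2).re)
        = -normSq z.1 + (((3 * Real.sqrt 3 / 2 : ℝ) : ℂ) * z.2 ^ 2 * (starRingEnd ℂ) z.1).re
          - normSq z.2 := by
      simp [add_mul, neg_mul, mul_conj]
      ring
    rw [hre]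
    have habs : (((3 * Real.sqrt 3 / 2 : ℝ) : ℂ) * z.2 ^ 2 * (starRingEnd ℂ) z.1).re
        ≤ 3 * Real.sqrt 3 / 2 * (‖z.2‖ ^ 2 * ‖z.1‖) := by
      calc _ ≤ ‖(((3 * Real.sqrt 3 / 2 : ℝ) : ℂ) * z.2 ^ 2 * (starRingEnd ℂ) z.1)‖ :=
            re_le_norm _
      _ = 3 * Real.sqrt 3 / 2 * (‖z.2‖ ^ 2 * ‖z.1‖) := by
            rw [norm_mul, norm_mul, norm_pow, Complex.norm_conj, Complex.norm_real, Real.norm_eq_abs,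
              _root_.abs_of_nonneg (by positivity : (0:ℝ) ≤ 3 * Real.sqrt 3 / 2)]
            ring
    have hkey := key_ineq ‖z.1‖ ‖z.2‖ (norm_nonneg _) hz'
    have h1 : normSq z.1 = ‖z.1‖ ^ 2 := by rw [normSq_eq_norm_sq]
    have h2 : normSq z.2 = ‖z.2‖ ^ 2 := by rw [normSq_eq_norm_sq]
    rw [h1, h2]
    linarith
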